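/- For any n ≥ 1 and k ≥ 0, the number of permutations π in S_n with lpk(π) = k and ipk(π) = 0 is equal to the binomial coefficient C(n, 2k). -/

import Mathlib

/-- The one-line notation of a permutation `π` of `{1,…,n}`, read as a function on 0-based
positions: `permWord π j = π_{j+1}` (values are 1-based; out-of-range positions give `0`). -/
def permWord {n : ℕ} (π : Equiv.Perm (Fin n)) (j : ℕ) : ℕ :=
  if h : j < n then ((π ⟨j, h⟩ : Fin n) : ℕ) + 1 else 0

/-- `π` contains `σ` as a consecutive pattern: some window of consecutive letters of `π`
has standardization `σ`, i.e. is order-isomorphic to the one-line word of `σ`. -/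
def ContainsPat {n m : ℕ} (π : Equiv.Perm (Fin n)) (σ : Equiv.Perm (Fin m)) : Prop :=
  ∃ i : ℕ, i + m ≤ n ∧ ∀ j k : Fin m,
    (permWord π (i + (j : ℕ)) < permWord π (i + (k : ℕ)) ↔ permWord σ j < permWord σ k)

/-- The number of peaks of `π`: 1-based indices `i` with `2 ≤ i ≤ n-1` and
`π_{i-1} < π_i > π_{i+1}`. -/
def pkCount {n : ℕ} (π : Equiv.Perm (Fin n)) : ℕ :=
  ((Finset.Icc 2 (n - 1)).filter fun i =>
    permWord π (i - 2) < permWord π (i - 1) ∧ permWord π i < permWord π (i - 1)).card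

/-- The number of left peaks of `π`: 1-based indices `i ∈ [n-1]` that are peaks,
or `i = 1` with `π_1 > π_2`. -/
def lpkCount {n : ℕ} (π : Equiv.Perm (Fin n)) : ℕ :=
  ((Finset.Icc 1 (n - 1)).filter fun i =>
    (2 ≤ i ∧ permWord π (i - 2) < permWord π (i - 1) ∧ permWord π i < permWord π (i - 1))
      ∨ (i = 1 ∧ permWord π 1 < permWord π 0)).card

/-- The number of peaks of `π⁻¹`. -/
def ipk {n : ℕ} (π : Equiv.Perm (Fin n)) : ℕ := pkCount π⁻¹

/-- The number of left peaks of `π⁻¹`. -/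
def ilpk {n : ℕ} (π : Equiv.Perm (Fin n)) : ℕ := lpkCount π⁻¹

namespace Stmt8

variable {n : ℕ}

/-- descent set of `π` (0-based positions `j` with `π j < π (j-1)`), as a finset of `ℕ`. -/
def dsc (π : Equiv.Perm (Fin n)) : Finset ℕ :=
  (Finset.Icc 1 (n-1)).filter fun j => permWord π j < permWord π (j-1)

/-- number of runs of consecutive elements of `T`. -/
def runs (T : Finset ℕ) : ℕ := (T.filter fun j => j - 1 ∉ T).card

/-- number of elements of `T` that are `≤ j`. -/
def cnt (T : Finset ℕ) (j : ℕ) : ℕ := (T.filter (· ≤ j)).card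

/-- the value at position `j` of the permutation built from descent set `T` (first value `c`). -/
def gN (c : ℕ) (T : Finset ℕ) (j : ℕ) : ℕ :=
  if j ∈ T then c - cnt T j else c + (j - cnt T j)

lemma permWord_lt_iff (π : Equiv.Perm (Fin n)) {a b : ℕ} (ha : a < n) (hb : b < n) :
    permWord π a < permWord π b ↔ (π ⟨a, ha⟩ : ℕ) < (π ⟨b, hb⟩ : ℕ) := by
  simp [permWord, ha, hb]

lemma permWord_ne (π : Equiv.Perm (Fin n)) {a b : ℕ} (ha : a < n) (hb : b < n) (hab : a ≠ b) :
    permWord π a ≠ permWord π b := by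
  simp only [permWord, ha, hb, dif_pos]
  intro h
  have := π.injective (Fin.val_injective (Nat.succ_injective h))
  exact hab (congrArg Fin.val this)

section cnt

variable {T : Finset ℕ} (hT : T ⊆ Finset.Icc 1 (n-1))

include hT in
lemma cnt_zero : cnt T 0 = 0 := by
  rw [cnt, Finset.card_eq_zero, Finset.eq_empty_iff_forall_notMem]
  intro x hx
  simp only [Finset.mem_filter, Nat.le_zero] at hx
  have := hT hx.1
  simp only [Finset.mem_Icc] at this
  omega

lemma cnt_succ (T : Finset ℕ) (j : ℕ) :
    cnt T (j+1) = cnt T j + (if j+1 ∈ T then 1 else 0) := by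
  by_cases h : j + 1 ∈ T
  · have : T.filter (· ≤ j+1) = insert (j+1) (T.filter (· ≤ j)) := by
      ext x
      simp only [Finset.mem_filter, Finset.mem_insert]
      constructor
      · rintro ⟨hx, hle⟩
        rcases Nat.lt_or_ge x (j+1) with h' | h'
        · exact Or.inr ⟨hx, by omega⟩
        · exact Or.inl (by omega)
      · rintro (rfl | ⟨hx, hle⟩)
        · exact ⟨h, le_rfl⟩
        · exact ⟨hx, by omega⟩
    rw [cnt, cnt, this, Finset.card_insert_of_notMem (by simp), if_pos h]
  · have : T.filter (· ≤ j+1) = T.filter (· ≤ j) := by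
      ext x
      simp only [Finset.mem_filter]
      constructor
      · rintro ⟨hx, hle⟩
        refine ⟨hx, ?_⟩
        rcases Nat.lt_or_ge x (j+1) with h' | h'
        · omega
        · exact absurd ((show x = j+1 by omega) ▸ hx) h
      · rintro ⟨hx, hle⟩; exact ⟨hx, by omega⟩
    rw [cnt, cnt, this, if_neg h]; omega

lemma cnt_mono (T : Finset ℕ) {i j : ℕ} (h : i ≤ j) : cnt T i ≤ cnt T j := by
  apply Finset.card_le_card
  intro x hx
  simp only [Finset.mem_filter] at *
  exact ⟨hx.1, le_trans hx.2 h⟩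

lemma cnt_le_card (T : Finset ℕ) (j : ℕ) : cnt T j ≤ T.card :=
  Finset.card_le_card (Finset.filter_subset _ _)

lemma one_le_cnt {j : ℕ} (hj : j ∈ T) : 1 ≤ cnt T j :=
  Finset.card_pos.mpr ⟨j, Finset.mem_filter.mpr ⟨hj, le_rfl⟩⟩

include hT in
lemma cnt_le_self (j : ℕ) : cnt T j ≤ j := by
  have : T.filter (· ≤ j) ⊆ Finset.Icc 1 j := by
    intro x hx
    simp only [Finset.mem_filter] at hx
    have := hT hx.1
    simp only [Finset.mem_Icc] at *
    omega
  calc cnt T j ≤ (Finset.Icc 1 j).card := Finset.card_le_card this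
    _ = j := by rw [Nat.card_Icc]; omega

lemma cnt_strict {i j : ℕ} (hij : i < j) (hj : j ∈ T) : cnt T i < cnt T j := by
  have : insert j (T.filter (· ≤ i)) ⊆ T.filter (· ≤ j) := by
    intro x hx
    simp only [Finset.mem_insert, Finset.mem_filter] at *
    rcases hx with rfl | ⟨hx, hle⟩
    · exact ⟨hj, le_rfl⟩
    · exact ⟨hx, by omega⟩
  have h2 := Finset.card_le_card this
  rw [Finset.card_insert_of_notMem (by simp; omega)] at h2
  exact h2

lemma cnt_lipschitz (T : Finset ℕ) {i j : ℕ} (hij : i ≤ j) : cnt T j ≤ cnt T i + (j - i) := by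
  induction j with
  | zero => simp [Nat.le_zero.mp hij]
  | succ m ih =>
    rcases Nat.lt_or_ge i (m+1) with h | h
    · have := ih (by omega)
      rw [cnt_succ]
      split <;> omega
    · have : i = m+1 := by omega
      subst this; simp

lemma cnt_gap {i j : ℕ} (hij : i < j) (hj : j ∉ T) : cnt T j ≤ cnt T i + (j - i) - 1 := by
  rcases Nat.eq_or_lt_of_le hij with rfl | h
  · rw [cnt_succ, if_neg hj]; omega
  · have step : cnt T j = cnt T (j-1) := by
      have : j - 1 + 1 = j := by omega
      rw [← this, cnt_succ, this, if_neg hj]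
      omega
    have := cnt_lipschitz T (show i ≤ j - 1 by omega)
    omega

include hT in
lemma cnt_full (hn : 1 ≤ n) : cnt T (n-1) = T.card := by
  unfold cnt
  congr 1
  apply Finset.filter_true_of_mem
  intro x hx
  have := hT hx
  simp only [Finset.mem_Icc] at this
  omega

include hT in
lemma card_le_cnt_add (hn : 1 ≤ n) (j : ℕ) : T.card ≤ cnt T j + (n - 1 - j) := by
  have := cnt_full hT hn
  have := cnt_lipschitz T (show min j (n-1) ≤ n-1 by omega)
  have h3 := cnt_mono T (show min j (n-1) ≤ j by omega)
  omega

include hT in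
lemma card_dsc_le (hn : 1 ≤ n) : T.card ≤ n - 1 := by
  calc T.card ≤ (Finset.Icc 1 (n-1)).card := Finset.card_le_card hT
    _ = n - 1 := by rw [Nat.card_Icc]; omega

end cnt

/-- no value strictly between two others appears after both of them -/
def noHighMid (π : Equiv.Perm (Fin n)) : Prop :=
  ∀ u v w : Fin n, u < v → v < w → π⁻¹ u < π⁻¹ v → π⁻¹ w < π⁻¹ v → False

lemma ipk_eq_zero_iff (π : Equiv.Perm (Fin n)) : ipk π = 0 ↔ noHighMid π := by
  rw [ipk, pkCount, Finset.card_eq_zero, Finset.eq_empty_iff_forall_notMem]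
  constructor
  · intro h0 u v w huv hvw h1 h2
    obtain ⟨v', hv'mem, hv'max⟩ := Finset.exists_max_image (Finset.Icc u w)
      (fun x => ((π⁻¹ x : Fin n) : ℕ))
      ⟨u, Finset.mem_Icc.mpr ⟨le_rfl, le_of_lt (huv.trans hvw)⟩⟩
    have hvmem : v ∈ Finset.Icc u w := Finset.mem_Icc.mpr ⟨le_of_lt huv, le_of_lt hvw⟩
    have hvv' : ((π⁻¹ v : Fin n) : ℕ) ≤ ((π⁻¹ v' : Fin n) : ℕ) := hv'max v hvmem
    have hu' : ((π⁻¹ u : Fin n) : ℕ) < ((π⁻¹ v' : Fin n) : ℕ) := lt_of_lt_of_le h1 hvv'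
    have hw' : ((π⁻¹ w : Fin n) : ℕ) < ((π⁻¹ v' : Fin n) : ℕ) := lt_of_lt_of_le h2 hvv'
    obtain ⟨huv', hv'w⟩ := Finset.mem_Icc.mp hv'mem
    have huv'2 : (u : ℕ) < (v' : ℕ) := by
      rcases lt_or_eq_of_le huv' with h | h
      · exact h
      · exact absurd (congrArg (fun x => ((π⁻¹ x : Fin n) : ℕ)) h) (ne_of_lt hu')
    have hv'w2 : (v' : ℕ) < (w : ℕ) := by
      rcases lt_or_eq_of_le hv'w with h | h
      · exact h
      · exact absurd (congrArg (fun x => ((π⁻¹ x : Fin n) : ℕ)) h) (ne_of_gt hw')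
    have hwn : (w : ℕ) ≤ n - 1 := by have := w.isLt; omega
    have h1v : 1 ≤ (v' : ℕ) := by omega
    have hvn : (v' : ℕ) + 1 ≤ n - 1 := by omega
    apply h0 ((v' : ℕ) + 1)
    rw [Finset.mem_filter]
    refine ⟨Finset.mem_Icc.mpr ⟨by omega, hvn⟩, ?_, ?_⟩
    · -- permWord π⁻¹ (v'-1) < permWord π⁻¹ v'
      have hlt1 : (v' : ℕ) - 1 < n := by omega
      have hlt2 : (v' : ℕ) < n := v'.isLt
      have hmm : ((v':ℕ) + 1 - 2) = (v' : ℕ) - 1 := by omega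
      have hmm2 : ((v':ℕ) + 1 - 1) = (v' : ℕ) := by omega
      rw [hmm, hmm2, permWord_lt_iff π⁻¹ hlt1 hlt2]
      have hmem : (⟨(v':ℕ) - 1, hlt1⟩ : Fin n) ∈ Finset.Icc u w :=
        Finset.mem_Icc.mpr ⟨by rw [Fin.le_def]; simp; omega, by rw [Fin.le_def]; simp; omega⟩
      have hle := hv'max _ hmem
      have hne : (⟨(v':ℕ) - 1, hlt1⟩ : Fin n) ≠ v' := by
        rw [Fin.ne_iff_vne]; simp; omega
      have : π⁻¹ (⟨(v':ℕ) - 1, hlt1⟩ : Fin n) ≠ π⁻¹ v' := fun hc => hne (π⁻¹.injective hc)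
      have hv'eq : (⟨(v':ℕ), hlt2⟩ : Fin n) = v' := Fin.ext rfl
      rw [hv'eq]
      rcases lt_or_eq_of_le hle with h | h
      · exact h
      · exact absurd (Fin.ext h) this
    · -- permWord π⁻¹ (v'+1) < permWord π⁻¹ v'
      have hlt1 : (v' : ℕ) + 1 < n := by omega
      have hlt2 : (v' : ℕ) < n := v'.isLt
      have hmm2 : ((v':ℕ) + 1 - 1) = (v' : ℕ) := by omega
      rw [hmm2, permWord_lt_iff π⁻¹ hlt1 hlt2]
      have hmem : (⟨(v':ℕ) + 1, hlt1⟩ : Fin n) ∈ Finset.Icc u w :=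
        Finset.mem_Icc.mpr ⟨by rw [Fin.le_def]; simp; omega, by rw [Fin.le_def]; simp; omega⟩
      have hle := hv'max _ hmem
      have hne : (⟨(v':ℕ) + 1, hlt1⟩ : Fin n) ≠ v' := by
        rw [Fin.ne_iff_vne]; simp
      have : π⁻¹ (⟨(v':ℕ) + 1, hlt1⟩ : Fin n) ≠ π⁻¹ v' := fun hc => hne (π⁻¹.injective hc)
      have hv'eq : (⟨(v':ℕ), hlt2⟩ : Fin n) = v' := Fin.ext rfl
      rw [hv'eq]
      rcases lt_or_eq_of_le hle with h | h
      · exact h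
      · exact absurd (Fin.ext h) this
  · intro hnhm i hi
    rw [Finset.mem_filter, Finset.mem_Icc] at hi
    obtain ⟨⟨h2i, hin⟩, hp1, hp2⟩ := hi
    have hn2 : 2 ≤ n - 1 := le_trans h2i hin
    have hu : i - 2 < n := by omega
    have hv : i - 1 < n := by omega
    have hw : i < n := by omega
    rw [permWord_lt_iff π⁻¹ hu hv] at hp1
    rw [permWord_lt_iff π⁻¹ hw hv] at hp2
    exact hnhm ⟨i-2, hu⟩ ⟨i-1, hv⟩ ⟨i, hw⟩ (by rw [Fin.lt_def]; simp; omega)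
      (by rw [Fin.lt_def]; simp; omega) (by rw [Fin.lt_def]; exact hp1)
      (by rw [Fin.lt_def]; exact hp2)

section formula

variable (π : Equiv.Perm (Fin n))

lemma dsc_subset : dsc π ⊆ Finset.Icc 1 (n-1) := Finset.filter_subset _ _

lemma mem_dsc_iff {j : ℕ} (hj : j < n) (hj1 : 1 ≤ j) :
    j ∈ dsc π ↔ (π ⟨j, hj⟩ : ℕ) < (π ⟨j-1, by omega⟩ : ℕ) := by
  rw [dsc, Finset.mem_filter, Finset.mem_Icc,
    permWord_lt_iff π hj (by omega : j - 1 < n)]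
  constructor
  · exact fun h => h.2
  · exact fun h => ⟨⟨hj1, by omega⟩, h⟩

/-- the main structure lemma, by induction on the position `j`. -/
lemma inv_formula (hn : 0 < n) (hπ : noHighMid π) :
    ∀ j, ∀ hj : j < n,
      (∀ v : Fin n, ((π⁻¹ v : Fin n) : ℕ) ≤ j ↔
        ((π ⟨0, hn⟩ : ℕ) - cnt (dsc π) j ≤ (v : ℕ) ∧
          (v : ℕ) ≤ (π ⟨0, hn⟩ : ℕ) + (j - cnt (dsc π) j)))
      ∧ cnt (dsc π) j ≤ (π ⟨0, hn⟩ : ℕ)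
      ∧ (π ⟨0, hn⟩ : ℕ) + (j - cnt (dsc π) j) ≤ n - 1
      ∧ (π ⟨j, hj⟩ : ℕ) = gN (π ⟨0, hn⟩ : ℕ) (dsc π) j := by
  set c := ((π ⟨0, hn⟩ : Fin n) : ℕ) with hc
  set D := dsc π with hD
  have hDsub : D ⊆ Finset.Icc 1 (n-1) := dsc_subset π
  have h0D : 0 ∉ D := fun h => by have := hDsub h; simp at this
  intro j
  induction j with
  | zero =>
    intro hj
    rw [cnt_zero hDsub]
    refine ⟨?_, by omega, by have := (π ⟨0, hn⟩).isLt; omega, ?_⟩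
    · intro v
      constructor
      · intro h
        have : (π⁻¹ v : Fin n) = ⟨0, hn⟩ := Fin.ext (show ((π⁻¹ v : Fin n) : ℕ) = 0 by omega)
        have : v = π ⟨0, hn⟩ := by rw [← this]; simp
        rw [this]; omega
      · intro ⟨h1, h2⟩
        have hveq : (v : ℕ) = c := by omega
        have : v = π ⟨0, hn⟩ := Fin.ext hveq
        rw [this]; simp
    · rw [gN, if_neg h0D]; omega
  | succ j ih =>
    intro hj1
    have hj : j < n := by omega
    obtain ⟨hINV, hside1, hside2, _⟩ := ih hj
    set a := cnt D j with ha
    set x := (π ⟨j+1, hj1⟩ : Fin n) with hxdef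
    have hxpos : ((π⁻¹ x : Fin n) : ℕ) = j + 1 := by
      rw [hxdef]; simp
    have haj : a ≤ j := cnt_le_self hDsub j
    have hxnot : ¬ (c - a ≤ (x:ℕ) ∧ (x:ℕ) ≤ c + (j - a)) := by
      intro hcon
      have := (hINV x).mpr hcon
      omega
    -- the previous value
    have hprev : c - a ≤ (π ⟨j, hj⟩ : ℕ) ∧ (π ⟨j, hj⟩ : ℕ) ≤ c + (j - a) := by
      apply (hINV (π ⟨j, hj⟩)).mp
      simp
    rcases Nat.lt_or_ge (x:ℕ) (c - a) with hlt | hge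
    · -- new minimum: descent
      have hca1 : 1 ≤ c - a := by omega
      have hxeq : (x : ℕ) = c - a - 1 := by
        by_contra hne
        have hxlt : (x:ℕ) + 1 < c - a := by omega
        have hw0 : c - a < n := by omega
        have hv0 : (x:ℕ) + 1 < n := by omega
        have hwpos : ((π⁻¹ ⟨c - a, hw0⟩ : Fin n) : ℕ) ≤ j :=
          (hINV ⟨c - a, hw0⟩).mpr ⟨by simp, by simp; omega⟩
        have hvnot : ¬ ((π⁻¹ (⟨(x:ℕ) + 1, hv0⟩ : Fin n) : Fin n) : ℕ) ≤ j := by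
          intro hcon
          have := (hINV ⟨(x:ℕ) + 1, hv0⟩).mp hcon
          simp at this; omega
        have hvne : ((π⁻¹ (⟨(x:ℕ) + 1, hv0⟩ : Fin n) : Fin n) : ℕ) ≠ j + 1 := by
          intro hcon
          have : (π⁻¹ (⟨(x:ℕ) + 1, hv0⟩ : Fin n) : Fin n) = π⁻¹ x :=
            Fin.ext (by rw [hxpos]; exact hcon)
          have := π⁻¹.injective this
          rw [Fin.ext_iff] at this
          simp at this
        exact hπ x ⟨(x:ℕ) + 1, hv0⟩ ⟨c - a, hw0⟩
          (by rw [Fin.lt_def]; simp) (by rw [Fin.lt_def]; simp; omega)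
          (by rw [Fin.lt_def]; omega) (by rw [Fin.lt_def]; omega)
      have hdesc : j + 1 ∈ D := by
        rw [hD, mem_dsc_iff π hj1 (by omega)]
        have : ((j : ℕ) + 1 - 1) = j := by omega
        simp only [this]
        omega
      have hcnt1 : cnt D (j+1) = a + 1 := by rw [cnt_succ, if_pos hdesc]
      rw [hcnt1]
      refine ⟨?_, by omega, by omega, ?_⟩
      · intro v
        have hsplit : ((π⁻¹ v : Fin n) : ℕ) ≤ j + 1 ↔
            (((π⁻¹ v : Fin n) : ℕ) ≤ j ∨ v = x) := by
          constructor
          · intro h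
            rcases Nat.lt_or_ge ((π⁻¹ v : Fin n) : ℕ) (j+1) with h' | h'
            · exact Or.inl (by omega)
            · right
              have : (π⁻¹ v : Fin n) = π⁻¹ x := Fin.ext (by omega)
              exact π⁻¹.injective this
          · rintro (h | rfl)
            · omega
            · omega
        rw [hsplit, hINV v]
        constructor
        · rintro (h | rfl)
          · omega
          · omega
        · intro ⟨h1, h2⟩
          rcases Nat.lt_or_ge ((v:ℕ)) (c - a) with h' | h'
          · right
            exact Fin.ext (by omega)
          · left; omega
      · rw [gN, if_pos hdesc, hcnt1]; omega
    · -- new maximum: ascent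
      have hgt : c + (j - a) < (x:ℕ) := by omega
      have hxeq : (x : ℕ) = c + (j - a) + 1 := by
        by_contra hne
        have hxgt : c + (j - a) + 1 < (x:ℕ) := by omega
        have hu0 : c + (j - a) < n := by omega
        have hv0 : (x:ℕ) - 1 < n := by omega
        have hupos : ((π⁻¹ ⟨c + (j - a), hu0⟩ : Fin n) : ℕ) ≤ j :=
          (hINV ⟨c + (j - a), hu0⟩).mpr ⟨by simp; omega, by simp⟩
        have hvnot : ¬ ((π⁻¹ (⟨(x:ℕ) - 1, hv0⟩ : Fin n) : Fin n) : ℕ) ≤ j := by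
          intro hcon
          have := (hINV ⟨(x:ℕ) - 1, hv0⟩).mp hcon
          simp at this; omega
        have hvne : ((π⁻¹ (⟨(x:ℕ) - 1, hv0⟩ : Fin n) : Fin n) : ℕ) ≠ j + 1 := by
          intro hcon
          have : (π⁻¹ (⟨(x:ℕ) - 1, hv0⟩ : Fin n) : Fin n) = π⁻¹ x :=
            Fin.ext (by rw [hxpos]; exact hcon)
          have := π⁻¹.injective this
          rw [Fin.ext_iff] at this
          simp at this; omega
        exact hπ ⟨c + (j - a), hu0⟩ ⟨(x:ℕ) - 1, hv0⟩ x
          (by rw [Fin.lt_def]; simp; omega) (by rw [Fin.lt_def]; simp; omega)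
          (by rw [Fin.lt_def]; omega) (by rw [Fin.lt_def]; omega)
      have hasc : j + 1 ∉ D := by
        rw [hD, mem_dsc_iff π hj1 (by omega)]
        have : ((j : ℕ) + 1 - 1) = j := by omega
        simp only [this]
        omega
      have hcnt1 : cnt D (j+1) = a := by rw [cnt_succ, if_neg hasc]; omega
      rw [hcnt1]
      have hxn : (x : ℕ) ≤ n - 1 := by have := x.isLt; omega
      refine ⟨?_, by omega, by omega, ?_⟩
      · intro v
        have hsplit : ((π⁻¹ v : Fin n) : ℕ) ≤ j + 1 ↔
            (((π⁻¹ v : Fin n) : ℕ) ≤ j ∨ v = x) := by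
          constructor
          · intro h
            rcases Nat.lt_or_ge ((π⁻¹ v : Fin n) : ℕ) (j+1) with h' | h'
            · exact Or.inl (by omega)
            · right
              have : (π⁻¹ v : Fin n) = π⁻¹ x := Fin.ext (by omega)
              exact π⁻¹.injective this
          · rintro (h | rfl)
            · omega
            · omega
        rw [hsplit, hINV v]
        constructor
        · rintro (h | rfl)
          · omega
          · omega
        · intro ⟨h1, h2⟩
          rcases Nat.lt_or_ge (c + (j - a)) ((v:ℕ)) with h' | h'
          · right
            exact Fin.ext (by omega)
          · left; omega
      · rw [gN, if_neg hasc, hcnt1]; omega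

lemma first_val_eq (hn : 0 < n) (hπ : noHighMid π) :
    ((π ⟨0, hn⟩ : Fin n) : ℕ) = (dsc π).card := by
  obtain ⟨hINV, hside1, _, _⟩ := inv_formula π hn hπ (n-1) (by omega)
  rw [cnt_full (dsc_subset π) hn] at hINV hside1
  have h0 := (hINV ⟨0, hn⟩).mp (by have := ((π⁻¹ (⟨0, hn⟩ : Fin n) : Fin n)).isLt; omega)
  simp at h0
  omega

lemma val_eq_gN (hn : 0 < n) (hπ : noHighMid π) (j : ℕ) (hj : j < n) :
    ((π ⟨j, hj⟩ : Fin n) : ℕ) = gN (dsc π).card (dsc π) j := by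
  obtain ⟨_, _, _, h⟩ := inv_formula π hn hπ j hj
  rw [h, ← first_val_eq π hn hπ]

end formula

lemma uniq (hn : 0 < n) {π π' : Equiv.Perm (Fin n)} (hπ : noHighMid π) (hπ' : noHighMid π')
    (hd : dsc π = dsc π') : π = π' := by
  apply Equiv.ext
  intro i
  have h1 := val_eq_gN π hn hπ i.val i.isLt
  have h2 := val_eq_gN π' hn hπ' i.val i.isLt
  have : (⟨i.val, i.isLt⟩ : Fin n) = i := Fin.ext rfl
  rw [this] at h1 h2
  exact Fin.ext (by rw [h1, h2, hd])

section construction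

variable {T : Finset ℕ} (hT : T ⊆ Finset.Icc 1 (n-1)) (hn : 0 < n)

include hT hn in
lemma gN_lt (j : ℕ) (hj : j < n) : gN T.card T j < n := by
  have h1 := card_dsc_le hT hn
  have h2 := cnt_le_self hT j
  have h3 := card_le_cnt_add hT hn j
  rw [gN]
  split <;> omega

include hT hn in
lemma gN_inj_lt {i j : ℕ} (hij : i < j) (hjn : j < n) :
    gN T.card T i ≠ gN T.card T j := by
  have hmono := cnt_mono T (le_of_lt hij)
  have hci := cnt_le_card T i
  have hcj := cnt_le_card T j
  have hsi := cnt_le_self hT i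
  rw [gN, gN]
  by_cases hiT : i ∈ T <;> by_cases hjT : j ∈ T
  · rw [if_pos hiT, if_pos hjT]
    have h1 := cnt_strict hij hjT
    have h2 := one_le_cnt hiT
    omega
  · rw [if_pos hiT, if_neg hjT]
    have h2 := one_le_cnt hiT
    omega
  · rw [if_neg hiT, if_pos hjT]
    have h2 := one_le_cnt hjT
    omega
  · rw [if_neg hiT, if_neg hjT]
    have h1 := cnt_gap hij hjT
    omega

include hT hn in
lemma gN_inj {i j : ℕ} (hin : i < n) (hjn : j < n) (h : gN T.card T i = gN T.card T j) :
    i = j := by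
  rcases lt_trichotomy i j with hij | hij | hij
  · exact absurd h (gN_inj_lt hT hn hij hjn)
  · exact hij
  · exact absurd h.symm (gN_inj_lt hT hn hij hin)

/-- the permutation with descent set `T` and no inverse peaks -/
noncomputable def phi (hT : T ⊆ Finset.Icc 1 (n-1)) (hn : 0 < n) : Equiv.Perm (Fin n) :=
  Equiv.ofBijective (fun i : Fin n => (⟨gN T.card T i.val, gN_lt hT hn i.val i.isLt⟩ : Fin n))
    (Finite.injective_iff_bijective.mp (fun i j hij => by
      apply Fin.ext
      exact gN_inj hT hn i.isLt j.isLt (congrArg Fin.val hij)))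

lemma phi_apply (i : Fin n) : ((phi hT hn i : Fin n) : ℕ) = gN T.card T i.val := rfl

include hT hn in
lemma dsc_phi : dsc (phi hT hn) = T := by
  ext j
  rw [dsc, Finset.mem_filter, Finset.mem_Icc]
  constructor
  · rintro ⟨⟨h1, h2⟩, hlt⟩
    have hjn : j < n := by omega
    have hjn' : j - 1 < n := by omega
    rw [permWord_lt_iff _ hjn hjn', phi_apply, phi_apply] at hlt
    simp only [Fin.val_mk] at hlt
    by_contra hjT
    -- j ∉ T : show gN j > gN (j-1)
    have hcnt : cnt T j = cnt T (j-1) := by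
      have hj1 : j - 1 + 1 = j := by omega
      rw [← hj1, cnt_succ, hj1, if_neg hjT]
      omega
    have hsj := cnt_le_self hT (j-1)
    have hcc := cnt_le_card T (j-1)
    rw [gN, gN, if_neg hjT] at hlt
    split at hlt <;> omega
  · intro hjT
    have hmem := hT hjT
    rw [Finset.mem_Icc] at hmem
    obtain ⟨h1, h2⟩ := hmem
    have hjn : j < n := by omega
    have hjn' : j - 1 < n := by omega
    refine ⟨⟨h1, h2⟩, ?_⟩
    rw [permWord_lt_iff _ hjn hjn', phi_apply, phi_apply]
    simp only [Fin.val_mk]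
    have hcnt : cnt T j = cnt T (j-1) + 1 := by
      have hj1 : j - 1 + 1 = j := by omega
      rw [← hj1, cnt_succ, hj1, if_pos hjT]
    have h2c := one_le_cnt hjT
    have hcc := cnt_le_card T j
    have hsj := cnt_le_self hT (j-1)
    rw [gN, gN, if_pos hjT]
    split <;> omega

include hT hn in
lemma phi_inv_le_iff (j : ℕ) (hjn : j < n) (v : Fin n) :
    (((phi hT hn)⁻¹ v : Fin n) : ℕ) ≤ j ↔
      (T.card - cnt T j ≤ (v : ℕ) ∧ (v : ℕ) ≤ T.card + (j - cnt T j)) := by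
  set π := phi hT hn with hπ
  have hforward : ∀ i : Fin n, (i : ℕ) ≤ j →
      T.card - cnt T j ≤ (π i : ℕ) ∧ (π i : ℕ) ≤ T.card + (j - cnt T j) := by
    intro i hi
    rw [hπ, phi_apply]
    have hmono := cnt_mono T hi
    have hlip := cnt_lipschitz T hi
    have hci := cnt_le_card T i.val
    have hcj := cnt_le_card T j
    have hsi := cnt_le_self hT i.val
    rw [gN]
    split
    · constructor <;> omega
    · constructor <;> omega
  -- image of Iic ⟨j⟩ equals Icc lo hi by cardinality
  have hlo : T.card - cnt T j < n := by
    have := card_dsc_le hT hn; omega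
  have hhi : T.card + (j - cnt T j) < n := by
    have h3 := card_le_cnt_add hT hn j
    have h2 := cnt_le_self hT j
    omega
  have himg : Finset.image π (Finset.Iic (⟨j, hjn⟩ : Fin n)) =
      Finset.Icc ⟨T.card - cnt T j, hlo⟩ ⟨T.card + (j - cnt T j), hhi⟩ := by
    apply Finset.eq_of_subset_of_card_le
    · intro x hx
      rw [Finset.mem_image] at hx
      obtain ⟨i, hi, rfl⟩ := hx
      rw [Finset.mem_Iic, Fin.le_def] at hi
      have := hforward i hi
      rw [Finset.mem_Icc, Fin.le_def, Fin.le_def]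
      simpa using this
    · rw [Fin.card_Icc, Finset.card_image_of_injective _ π.injective, Fin.card_Iic]
      simp only [Fin.val_mk]
      have h2 := cnt_le_self hT j
      have hcj := cnt_le_card T j
      omega
  constructor
  · intro h
    have : π (π⁻¹ v) = v := π.apply_symm_apply v
    have := hforward (π⁻¹ v) h
    rw [show π (π⁻¹ v) = v from π.apply_symm_apply v] at this
    exact this
  · intro ⟨h1, h2⟩
    have hv : v ∈ Finset.Icc ⟨T.card - cnt T j, hlo⟩ ⟨T.card + (j - cnt T j), hhi⟩ := by
      rw [Finset.mem_Icc, Fin.le_def, Fin.le_def]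
      simp only [Fin.val_mk]
      exact ⟨h1, h2⟩
    rw [← himg, Finset.mem_image] at hv
    obtain ⟨i, hi, hiv⟩ := hv
    rw [Finset.mem_Iic, Fin.le_def] at hi
    have : π⁻¹ v = i := by rw [← hiv]; exact π.symm_apply_apply i
    rw [this]
    exact hi

include hT hn in
lemma noHighMid_phi : noHighMid (phi hT hn) := by
  intro u v w huv hvw h1 h2
  rw [Fin.lt_def] at h1 h2 huv hvw
  have hpv : 1 ≤ (((phi hT hn)⁻¹ v : Fin n) : ℕ) := by omega
  have hjn : (((phi hT hn)⁻¹ v : Fin n) : ℕ) - 1 < n := by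
    have := ((phi hT hn)⁻¹ v).isLt; omega
  have hu := (phi_inv_le_iff hT hn _ hjn u).mp (by omega)
  have hw := (phi_inv_le_iff hT hn _ hjn w).mp (by omega)
  have hv := (phi_inv_le_iff hT hn _ hjn v).mpr (by omega)
  omega

end construction

lemma cnt_zero' {A : Finset ℕ} (h0 : 0 ∉ A) : cnt A 0 = 0 := by
  rw [cnt, Finset.card_eq_zero, Finset.eq_empty_iff_forall_notMem]
  intro x hx
  simp only [Finset.mem_filter, Nat.le_zero] at hx
  exact h0 (hx.2 ▸ hx.1)

lemma cnt_full' {A : Finset ℕ} (hA : A ⊆ Finset.Icc 1 n) : cnt A n = A.card := by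
  unfold cnt
  congr 1
  apply Finset.filter_true_of_mem
  intro x hx
  have := hA hx
  simp only [Finset.mem_Icc] at this
  exact this.2

/-- `lpkCount` is the number of runs of the descent set. -/
lemma lpk_eq_runs (π : Equiv.Perm (Fin n)) : lpkCount π = runs (dsc π) := by
  rw [lpkCount, runs, dsc, Finset.filter_filter]
  apply Finset.card_nbij' id id
  · intro i hi
    simp only [Finset.mem_coe, Finset.mem_filter, Finset.mem_Icc, id] at *
    obtain ⟨hmem, hP⟩ := hi
    obtain ⟨h1i, hin⟩ := hmem
    refine ⟨⟨h1i, hin⟩, ?_, ?_⟩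
    · rcases hP with ⟨h2, _, hds⟩ | ⟨rfl, hds⟩
      · exact hds
      · exact hds
    · intro hmem'
      obtain ⟨⟨ha, hb⟩, hlt⟩ := hmem'
      rcases hP with ⟨h2, hasc, hds⟩ | ⟨rfl, hds⟩
      · have : i - 1 - 1 = i - 2 := by omega
        rw [this] at hlt
        omega
      · omega
  · intro i hi
    simp only [Finset.mem_coe, Finset.mem_filter, Finset.mem_Icc, id] at *
    obtain ⟨⟨h1i, hin⟩, hds, hnd⟩ := hi
    refine ⟨⟨h1i, hin⟩, ?_⟩
    rcases Nat.lt_or_ge i 2 with h2 | h2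
    · have : i = 1 := by omega
      subst this
      exact Or.inr ⟨rfl, hds⟩
    · left
      refine ⟨h2, ?_, hds⟩
      have hine : i - 2 ≠ i - 1 := by omega
      have hi2 : i - 2 < n := by omega
      have hi1 : i - 1 < n := by omega
      have hne := permWord_ne π hi2 hi1 hine
      have : ¬ (permWord π (i-1) < permWord π (i-1-1)) := by
        intro hcon
        exact hnd ⟨⟨by omega, by omega⟩, hcon⟩
      have : ¬ (permWord π (i-1) < permWord π (i-2)) := by
        have heq : i - 1 - 1 = i - 2 := by omega
        rw [heq] at this
        exact this
      omega
  · intro i hi; rfl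
  · intro i hi; rfl

section stage2

/-- the boundary set of `T` inside `[1, n]`. -/
def bnd (n : ℕ) (T : Finset ℕ) : Finset ℕ :=
  (Finset.Icc 1 n).filter fun j => ¬((j ∈ T) ↔ (j-1 ∈ T))

variable {T : Finset ℕ} (hT : T ⊆ Finset.Icc 1 (n-1)) (hn : 0 < n)

lemma Icc_one_eq_map :
    Finset.Icc 1 n = (Finset.range n).map ⟨fun i => i + 1, fun a b h => by simpa using h⟩ := by
  ext x
  simp only [Finset.mem_Icc, Finset.mem_map, Finset.mem_range, Function.Embedding.coeFn_mk]
  constructor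
  · intro ⟨h1, h2⟩
    exact ⟨x - 1, by omega, show x - 1 + 1 = x by omega⟩
  · rintro ⟨a, ha, rfl⟩
    show 1 ≤ a + 1 ∧ a + 1 ≤ n
    omega

lemma card_filter_Icc_int (P : ℕ → Prop) [DecidablePred P] :
    (((Finset.Icc 1 n).filter P).card : ℤ) =
      ∑ i ∈ Finset.range n, (if P (i+1) then (1:ℤ) else 0) := by
  rw [Finset.card_filter, Icc_one_eq_map, Finset.sum_map]
  push_cast
  apply Finset.sum_congr rfl
  intro i _
  rfl

include hT hn in
lemma card_bnd : (bnd n T).card = 2 * runs T := by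
  have h0T : 0 ∉ T := fun h => by have := hT h; simp at this
  have hnT : n ∉ T := fun h => by
    have := hT h; rw [Finset.mem_Icc] at this; omega
  have hTn : T ⊆ Finset.Icc 1 n := fun x hx => by
    have := hT hx; rw [Finset.mem_Icc] at *; omega
  -- split the boundary into starts and ends
  have hsplit : bnd n T = ((Finset.Icc 1 n).filter fun j => j ∈ T ∧ j-1 ∉ T) ∪
      ((Finset.Icc 1 n).filter fun j => j ∉ T ∧ j-1 ∈ T) := by
    rw [bnd, ← Finset.filter_or]
    apply Finset.filter_congr
    intro x _
    constructor
    · intro h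
      by_cases hx : x ∈ T <;> by_cases hx1 : x - 1 ∈ T <;> tauto
    · intro h
      by_cases hx : x ∈ T <;> by_cases hx1 : x - 1 ∈ T <;> tauto
  have hdisj : Disjoint ((Finset.Icc 1 n).filter fun j => j ∈ T ∧ j-1 ∉ T)
      ((Finset.Icc 1 n).filter fun j => j ∉ T ∧ j-1 ∈ T) := by
    rw [Finset.disjoint_left]
    intro x hx1 hx2
    rw [Finset.mem_filter] at hx1 hx2
    exact hx2.2.1 hx1.2.1
  have hstart : ((Finset.Icc 1 n).filter fun j => j ∈ T ∧ j-1 ∉ T).card = runs T := by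
    rw [runs]
    congr 1
    ext x
    simp only [Finset.mem_filter, Finset.mem_Icc]
    constructor
    · rintro ⟨_, h⟩; exact h
    · intro ⟨hx, hx1⟩
      have := hTn hx
      rw [Finset.mem_Icc] at this
      exact ⟨this, hx, hx1⟩
  have hend : ((Finset.Icc 1 n).filter fun j => j ∉ T ∧ j-1 ∈ T).card =
      ((Finset.Icc 1 n).filter fun j => j ∈ T ∧ j-1 ∉ T).card := by
    have hcast : ∀ a b : ℕ, (a : ℤ) = (b : ℤ) → a = b := fun a b h => by exact_mod_cast h
    apply (hcast _ _ ?_).symm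
    rw [card_filter_Icc_int, card_filter_Icc_int]
    have htel := Finset.sum_range_sub (fun j => if j ∈ T then (1:ℤ) else 0) n
    rw [if_neg hnT, if_neg h0T, sub_zero] at htel
    have hpt : ∀ i, (if i+1 ∈ T then (1:ℤ) else 0) - (if i ∈ T then (1:ℤ) else 0) =
        (if (i+1 ∈ T ∧ i+1-1 ∉ T) then (1:ℤ) else 0) -
        (if (i+1 ∉ T ∧ i+1-1 ∈ T) then (1:ℤ) else 0) := by
      intro i
      have : i + 1 - 1 = i := by omega
      rw [this]
      by_cases h1 : i+1 ∈ T <;> by_cases h2 : i ∈ T <;> simp [h1, h2]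
    rw [Finset.sum_congr rfl (fun i _ => hpt i), Finset.sum_sub_distrib] at htel
    omega
  rw [hsplit, Finset.card_union_of_disjoint hdisj, hstart, hend, hstart]
  omega

include hT hn in
lemma bnd_parity : ∀ j, j ≤ n - 1 → (Odd (cnt (bnd n T) j) ↔ j ∈ T) := by
  have h0T : 0 ∉ T := fun h => by have := hT h; simp at this
  have h0b : 0 ∉ bnd n T := fun h => by
    rw [bnd, Finset.mem_filter, Finset.mem_Icc] at h; omega
  intro j
  induction j with
  | zero =>
    intro _
    rw [cnt_zero' h0b]
    simp [h0T]
  | succ j ih =>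
    intro hj1
    have hj : j ≤ n - 1 := by omega
    rw [cnt_succ]
    have hmem : (j + 1 ∈ bnd n T) ↔ ¬((j+1 ∈ T) ↔ (j ∈ T)) := by
      rw [bnd, Finset.mem_filter, Finset.mem_Icc]
      have : j + 1 - 1 = j := by omega
      rw [this]
      constructor
      · exact fun h => h.2
      · exact fun h => ⟨⟨by omega, by omega⟩, h⟩
    by_cases hb : j + 1 ∈ bnd n T
    · rw [if_pos hb, Nat.odd_add_one, ih hj]
      rw [hmem] at hb
      tauto
    · rw [if_neg hb, Nat.add_zero, ih hj]
      rw [hmem, not_not] at hb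
      tauto

include hn in
lemma bnd_inj {T T' : Finset ℕ} (hT : T ⊆ Finset.Icc 1 (n-1)) (hT' : T' ⊆ Finset.Icc 1 (n-1))
    (h : bnd n T = bnd n T') : T = T' := by
  ext j
  by_cases hj : j ∈ Finset.Icc 1 (n-1)
  · rw [Finset.mem_Icc] at hj
    rw [← bnd_parity hT hn j (by omega), ← bnd_parity hT' hn j (by omega), h]
  · constructor
    · intro hmem; exact absurd (hT hmem) hj
    · intro hmem; exact absurd (hT' hmem) hj

lemma bnd_surj {A : Finset ℕ} (hn : 0 < n) (hA : A ⊆ Finset.Icc 1 n) {k : ℕ}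
    (hcard : A.card = 2 * k) :
    ∃ T ⊆ Finset.Icc 1 (n-1), runs T = k ∧ bnd n T = A := by
  have h0A : 0 ∉ A := fun h => by have := hA h; simp at this
  set TA := (Finset.Icc 1 (n-1)).filter (fun j => Odd (cnt A j)) with hTA
  have hTAsub : TA ⊆ Finset.Icc 1 (n-1) := Finset.filter_subset _ _
  have hodd : ∀ j, j ≤ n - 1 → (j ∈ TA ↔ Odd (cnt A j)) := by
    intro j hj
    rcases Nat.eq_zero_or_pos j with rfl | hjpos
    · rw [cnt_zero' h0A]
      simp [hTA]
    · rw [hTA, Finset.mem_filter, Finset.mem_Icc]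
      constructor
      · exact fun h => h.2
      · exact fun h => ⟨⟨hjpos, hj⟩, h⟩
  have hstep : ∀ j, 1 ≤ j → cnt A j = cnt A (j-1) + (if j ∈ A then 1 else 0) := by
    intro j hj
    have : j - 1 + 1 = j := by omega
    rw [← this, cnt_succ, this]
  have hfull : cnt A n = 2 * k := by rw [cnt_full' hA, hcard]
  have hbnd : bnd n TA = A := by
    ext j
    rw [bnd, Finset.mem_filter, Finset.mem_Icc]
    by_cases hjI : 1 ≤ j ∧ j ≤ n
    · obtain ⟨hj1, hjn⟩ := hjI
      rcases Nat.lt_or_ge j n with hjlt | hjge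
      · -- 1 ≤ j ≤ n-1
        have e1 : j ∈ TA ↔ Odd (cnt A j) := hodd j (by omega)
        have e2 : j - 1 ∈ TA ↔ Odd (cnt A (j-1)) := hodd (j-1) (by omega)
        have e3 := hstep j hj1
        constructor
        · intro ⟨_, h⟩
          rw [e1, e2, Nat.odd_iff, Nat.odd_iff] at h
          by_cases hjA : j ∈ A
          · exact hjA
          · rw [if_neg hjA] at e3
            exact absurd (by omega) h
        · intro hjA
          refine ⟨⟨hj1, hjn⟩, ?_⟩
          rw [e1, e2, Nat.odd_iff, Nat.odd_iff]
          rw [if_pos hjA] at e3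
          omega
      · -- j = n
        have hjeq : j = n := by omega
        subst hjeq
        have hnTA : j ∉ TA := fun h => by
          have := hTAsub h; rw [Finset.mem_Icc] at this; omega
        have e2 : j - 1 ∈ TA ↔ Odd (cnt A (j-1)) := hodd (j-1) (by omega)
        have e3 := hstep j hj1
        constructor
        · intro ⟨_, h⟩
          have h' : j - 1 ∈ TA := by tauto
          rw [e2, Nat.odd_iff] at h'
          by_contra hjA
          rw [if_neg hjA] at e3
          omega
        · intro hjA
          refine ⟨⟨hj1, hjn⟩, ?_⟩
          rw [if_pos hjA] at e3
          have h' : j - 1 ∈ TA := by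
            rw [e2, Nat.odd_iff]
            omega
          exact fun hiff => hnTA (hiff.mpr h')
    · constructor
      · intro ⟨h, _⟩; omega
      · intro hjA
        have := hA hjA
        rw [Finset.mem_Icc] at this
        omega
  refine ⟨TA, hTAsub, ?_, hbnd⟩
  have := card_bnd hTAsub hn
  rw [hbnd, hcard] at this
  omega

end stage2

end Stmt8

/-- For any `n ≥ 1` and `k ≥ 0`, the number of permutations `π ∈ S_n` with `lpk(π) = k`
whose inverse has no peaks is the binomial coefficient `C(n, 2k)`. -/
theorem stmt8 (n k : ℕ) (hn : 1 ≤ n) :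
    Nat.card {π : Equiv.Perm (Fin n) // lpkCount π = k ∧ ipk π = 0}
      = Nat.choose n (2 * k) := by
  classical
  have hn0 : 0 < n := hn
  rw [Nat.card_eq_fintype_card, Fintype.card_subtype]
  have step1 : (Finset.univ.filter fun π : Equiv.Perm (Fin n) =>
        lpkCount π = k ∧ ipk π = 0).card
      = ((Finset.Icc 1 (n-1)).powerset.filter fun T => Stmt8.runs T = k).card := by
    apply Finset.card_bij (fun π _ => Stmt8.dsc π)
    · intro π hπ
      rw [Finset.mem_filter] at hπ
      rw [Finset.mem_filter, Finset.mem_powerset]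
      refine ⟨Stmt8.dsc_subset π, ?_⟩
      rw [← Stmt8.lpk_eq_runs]
      exact hπ.2.1
    · intro π1 h1 π2 h2 heq
      rw [Finset.mem_filter] at h1 h2
      exact Stmt8.uniq hn0 ((Stmt8.ipk_eq_zero_iff π1).mp h1.2.2)
        ((Stmt8.ipk_eq_zero_iff π2).mp h2.2.2) heq
    · intro T hT
      rw [Finset.mem_filter, Finset.mem_powerset] at hT
      obtain ⟨hsub, hruns⟩ := hT
      refine ⟨Stmt8.phi hsub hn0, ?_, Stmt8.dsc_phi hsub hn0⟩
      rw [Finset.mem_filter]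
      refine ⟨Finset.mem_univ _, ?_, ?_⟩
      · rw [Stmt8.lpk_eq_runs, Stmt8.dsc_phi hsub hn0]
        exact hruns
      · exact (Stmt8.ipk_eq_zero_iff _).mpr (Stmt8.noHighMid_phi hsub hn0)
  have step2 : ((Finset.Icc 1 (n-1)).powerset.filter fun T => Stmt8.runs T = k).card
      = ((Finset.Icc 1 n).powersetCard (2*k)).card := by
    apply Finset.card_bij (fun T _ => Stmt8.bnd n T)
    · intro T hT
      rw [Finset.mem_filter, Finset.mem_powerset] at hT
      rw [Finset.mem_powersetCard]
      exact ⟨Finset.filter_subset _ _, by rw [Stmt8.card_bnd hT.1 hn0, hT.2]⟩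
    · intro T1 h1 T2 h2 heq
      rw [Finset.mem_filter, Finset.mem_powerset] at h1 h2
      exact Stmt8.bnd_inj hn0 h1.1 h2.1 heq
    · intro A hA
      rw [Finset.mem_powersetCard] at hA
      obtain ⟨T, hsub, hr, hb⟩ := Stmt8.bnd_surj hn0 hA.1 hA.2
      exact ⟨T, Finset.mem_filter.mpr ⟨Finset.mem_powerset.mpr hsub, hr⟩, hb⟩
  rw [step1, step2, Finset.card_powersetCard, Nat.card_Icc]
  congr 1
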